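/- For every high-multiplicity scheduling instance on identical machines there exists a schedule x* that minimizes Cenvy (i.e., Cenvy(x*) ≤ Cenvy(x) for every schedule x) and has gap size at most pmax, i.e., x* i₁ j ≤ x* i₂ j + pmax for all machines i₁, i₂ and all job types j. -/
import Mathlib


/-- A schedule assigns `x i j` jobs of type `j` to machine `i`, placing all `n j` jobs. -/
def IsSchedule {m d : ℕ} (n : Fin d → ℕ) (x : Fin m → Fin d → ℕ) : Prop :=
  ∀ j, ∑ i, x i j = n j

/-- The load of machine `i` under schedule `x`. -/
def load {m d : ℕ} (p : Fin d → ℕ) (x : Fin m → Fin d → ℕ) (i : Fin m) : ℕ :=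
  ∑ j, x i j * p j

/-- The makespan: the maximum machine load. -/
def Cmax {m d : ℕ} (p : Fin d → ℕ) (x : Fin m → Fin d → ℕ) : ℕ :=
  Finset.univ.sup (load p x)

/-- The minimum machine load. -/
noncomputable def Cmin {m d : ℕ} (p : Fin d → ℕ) (x : Fin m → Fin d → ℕ) : ℕ :=
  sInf (Set.range (load p x))

/-- The envy value: maximum load minus minimum load. -/
noncomputable def Cenvy {m d : ℕ} (p : Fin d → ℕ) (x : Fin m → Fin d → ℕ) : ℕ :=
  Cmax p x - Cmin p x

set_option maxHeartbeats 1000000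

lemma list_sum_map_count {d : ℕ} (p : Fin d → ℕ) (l : List (Fin d)) :
    (l.map p).sum = ∑ k, l.count k * p k := by
  induction l with
  | nil => simp
  | cons a l ih =>
    rw [List.map_cons, List.sum_cons, ih]
    have h : ∀ k : Fin d, (a :: l).count k * p k
        = l.count k * p k + (if k = a then p k else 0) := by
      intro k
      by_cases hk : k = a
      · subst hk; simp [List.count_cons, add_mul]
      · simp [List.count_cons, hk, Ne.symm hk]
    rw [Finset.sum_congr rfl (fun k _ => h k), Finset.sum_add_distrib,
      Finset.sum_ite_eq' Finset.univ a (fun k => p k)]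
    simp [add_comm]

lemma count_flat {d : ℕ} (u : Fin d → ℕ) (k : Fin d) :
    (((List.finRange d).flatMap fun k' => List.replicate (u k') k').count k) = u k := by
  rw [List.count_flatMap]
  have h : ∀ k' : Fin d, (List.count k ∘ fun k' => List.replicate (u k') k') k'
      = if k = k' then u k' else 0 := by
    intro k'
    simp only [Function.comp, List.count_replicate, beq_iff_eq]
    by_cases h : k' = k
    · subst h; simp
    · rw [if_neg h, if_neg (Ne.symm h)]
  rw [List.map_congr_left (fun k' _ => h k'), ← Fin.sum_univ_def]
  simp

lemma length_flat {d : ℕ} (u : Fin d → ℕ) :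
    (((List.finRange d).flatMap fun k' => List.replicate (u k') k')).length = ∑ k, u k := by
  rw [List.length_flatMap, ← Fin.sum_univ_def]
  simp

lemma exists_submult {d : ℕ} (p u : Fin d → ℕ) (P q : ℕ) (hq : 1 ≤ q)
    (hp1 : ∀ k, 1 ≤ p k) (hpP : ∀ k, p k ≤ P) (hcount : q ≤ ∑ k, u k) :
    ∃ (s : Fin d → ℕ) (t : ℕ), (∀ k, s k ≤ u k) ∧ 1 ≤ t ∧ t ≤ P ∧
      ∑ k, s k * p k = t * q := by
  classical
  set L : List (Fin d) := (List.finRange d).flatMap fun k' => List.replicate (u k') k' with hL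
  have hlen : L.length = ∑ k, u k := length_flat u
  have hmemL : ∀ x ∈ L, x ∈ L := fun x h => h
  -- prefix sums
  set W : ℕ → ℕ := fun i => ((L.take i).map p).sum with hW
  have hpig : ∃ (i i' : Fin (q + 1)), i ≠ i' ∧ W i % q = W i' % q := by
    have := Fintype.exists_ne_map_eq_of_card_lt
      (fun i : Fin (q+1) => (⟨W i % q, Nat.mod_lt _ hq⟩ : Fin q)) (by simp)
    obtain ⟨a, b, hab, he⟩ := this
    exact ⟨a, b, hab, by simpa using congrArg Fin.val he⟩
  obtain ⟨i₀, i₀', hne, hmod⟩ := hpig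
  -- wlog i < i'
  obtain ⟨i, i', hlt, hmod⟩ : ∃ i i' : Fin (q+1), (i : ℕ) < i' ∧ W i % q = W i' % q := by
    rcases lt_or_gt_of_ne hne with h | h
    · exact ⟨i₀, i₀', h, hmod⟩
    · exact ⟨i₀', i₀, h, hmod.symm⟩
  have hi'q : (i' : ℕ) ≤ q := Nat.lt_succ_iff.mp i'.isLt
  have hi'len : (i' : ℕ) ≤ L.length := hlen ▸ le_trans hi'q hcount
  set L' : List (Fin d) := (L.take i').drop i with hL'
  have hsplit : L.take (i' : ℕ) = L.take (i : ℕ) ++ L' := by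
    rw [hL']
    conv_lhs => rw [← List.take_append_drop (i : ℕ) (L.take (i' : ℕ))]
    rw [List.take_take, min_eq_left (le_of_lt hlt)]
  have hWsplit : W i' = W i + (L'.map p).sum := by
    rw [hW]; simp only []
    rw [hsplit, List.map_append, List.sum_append]
  set w : ℕ := (L'.map p).sum with hw
  have hlenL' : L'.length = (i' : ℕ) - i := by
    rw [hL', List.length_drop, List.length_take, min_eq_left hi'len]
  have hw1 : 1 ≤ w := by
    have hlw : L'.length ≤ w := by
      have h2 := List.sum_le_sum (l := L') (f := fun _ => 1) (g := p) (fun a _ => hp1 a)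
      simpa [hw] using h2
    omega
  have hwB : w ≤ q * P := by
    have hB : W i' ≤ (i' : ℕ) * P := by
      have := List.sum_le_card_nsmul ((L.take (i' : ℕ)).map p) P (by
        intro x hx
        obtain ⟨a, _, rfl⟩ := List.mem_map.mp hx
        exact hpP a)
      simpa [hW, List.length_take, min_eq_left hi'len, smul_eq_mul] using this
    have : w ≤ W i' := by omega
    calc w ≤ (i' : ℕ) * P := le_trans this hB
    _ ≤ q * P := Nat.mul_le_mul_right _ hi'q
  have hdvd : q ∣ w := by
    have : W i ≡ W i' [MOD q] := hmod
    have h2 := (Nat.modEq_iff_dvd' (by omega : W i ≤ W i')).mp this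
    have : W i' - W i = w := by omega
    rwa [this] at h2
  refine ⟨fun k => L'.count k, w / q, ?_, ?_, ?_, ?_⟩
  · intro k
    have hsub : L'.Sublist L := (List.drop_sublist _ _).trans (List.take_sublist _ _)
    have := hsub.count_le k
    rwa [count_flat u k] at this
  · exact (Nat.one_le_div_iff (by omega)).mpr (Nat.le_of_dvd (by omega) hdvd)
  · have h2 := Nat.div_le_div_right (c := q) hwB
    rwa [Nat.mul_div_cancel_left _ (by omega : 0 < q)] at h2
  · rw [← list_sum_map_count, ← hw, Nat.div_mul_cancel hdvd]


def Psi {m d : ℕ} (x : Fin m → Fin d → ℕ) : ℕ := ∑ i, ∑ k, x i k * x i k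

lemma sum_split {m : ℕ} (f : Fin m → ℕ) (i₁ i₂ : Fin m) (h : i₁ ≠ i₂) :
    ∑ i, f i = f i₁ + f i₂ + ∑ i ∈ (Finset.univ.erase i₁).erase i₂, f i := by
  rw [← Finset.add_sum_erase _ f (Finset.mem_univ i₁),
      ← Finset.add_sum_erase _ f (Finset.mem_erase.mpr ⟨h.symm, Finset.mem_univ i₂⟩)]
  ring

lemma improve {m d : ℕ} (hm : 1 ≤ m) (p : Fin d → ℕ) (hp : ∀ k, 1 ≤ p k)
    (n : Fin d → ℕ) (x : Fin m → Fin d → ℕ) (hx : IsSchedule n x)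
    (i₁ i₂ : Fin m) (j : Fin d) (hviol : x i₂ j + Finset.univ.sup p < x i₁ j) :
    ∃ y : Fin m → Fin d → ℕ, IsSchedule n y ∧ Cenvy p y ≤ Cenvy p x ∧ Psi y < Psi x := by
  classical
  set P := Finset.univ.sup p with hPdef
  have hPj : p j ≤ P := Finset.le_sup (Finset.mem_univ j)
  have hpj1 : 1 ≤ p j := hp j
  have hne : i₁ ≠ i₂ := by
    intro e; rw [e] at hviol; omega
  -- obtain the transfer data
  obtain ⟨t, s, ht1, htlt, hsj, hsle, hload⟩ :
      ∃ (t : ℕ) (s : Fin d → ℕ), 1 ≤ t ∧ t + x i₂ j < x i₁ j ∧ s j = 0 ∧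
        (∀ k, s k ≤ x i₂ k - x i₁ k) ∧
        (∑ k, s k * p k = t * p j ∨
          ((∀ k, s k = 0) ∧ t = 1 ∧ load p x i₂ + p j ≤ load p x i₁)) := by
    by_cases hD : load p x i₂ + p j ≤ load p x i₁
    · exact ⟨1, fun _ => 0, le_refl 1, by omega, rfl, fun k => Nat.zero_le _,
        Or.inr ⟨fun _ => rfl, rfl, hD⟩⟩
    · push_neg at hD
      set u : Fin d → ℕ := fun k => if k = j then 0 else x i₂ k - x i₁ k with hu
      have hcount : p j ≤ ∑ k, u k := by
        -- work in ℤ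
        have hterm : ∀ k, ((x i₂ k : ℤ) - x i₁ k) * p k ≤ (u k : ℤ) * p k
            ∨ k = j := by
          intro k
          by_cases hk : k = j
          · exact Or.inr hk
          · left
            have h1 : (x i₂ k : ℤ) - x i₁ k ≤ ((u k : ℕ) : ℤ) := by
              simp only [hu, if_neg hk]; omega
            exact mul_le_mul_of_nonneg_right h1 (by positivity)
        have hsum1 : ∑ k, ((x i₂ k : ℤ) - x i₁ k) * p k
            = (load p x i₂ : ℤ) - load p x i₁ := by
          simp only [load, sub_mul]
          push_cast
          rw [Finset.sum_sub_distrib]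
        have hsum2 : ∑ k, ((x i₂ k : ℤ) - x i₁ k) * p k
            + ((x i₁ j : ℤ) - x i₂ j) * p j ≤ ∑ k, (u k : ℤ) * p k := by
          have hpt : ∀ k ∈ Finset.univ, (0:ℤ) ≤
              (u k : ℤ) * p k - ((x i₂ k : ℤ) - x i₁ k) * p k := by
            intro k _
            rcases hterm k with h | h
            · omega
            · rw [h]
              have h0 : (u j : ℤ) = 0 := by simp [hu]
              rw [h0, zero_mul]
              have h1 : (x i₂ j : ℤ) - x i₁ j ≤ 0 := by
                have := hviol; push_cast; omega
              nlinarith [(by positivity : (0:ℤ) ≤ (p j : ℤ))]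
          have hj := Finset.single_le_sum hpt (Finset.mem_univ j)
          have hju : (u j : ℤ) = 0 := by simp [hu]
          have hsum3 : ∑ k, ((u k : ℤ) * p k - ((x i₂ k : ℤ) - x i₁ k) * p k)
              = ∑ k, (u k : ℤ) * p k - ∑ k, ((x i₂ k : ℤ) - x i₁ k) * p k := by
            rw [Finset.sum_sub_distrib]
          rw [hsum3] at hj
          rw [hju, zero_mul] at hj
          have : ((x i₁ j : ℤ) - x i₂ j) * p j ≤ - (((x i₂ j : ℤ) - x i₁ j) * p j) := by ring_nf; omega
          nlinarith [hj]
        -- lower bound on ∑ u p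
        have hlow : (P : ℤ) * p j + 1 ≤ ∑ k, (u k : ℤ) * p k := by
          rw [hsum1] at hsum2
          have h1 : (1 : ℤ) - p j ≤ (load p x i₂ : ℤ) - load p x i₁ := by
            push_cast; omega
          have h2 : ((P : ℤ) + 1) * p j ≤ ((x i₁ j : ℤ) - x i₂ j) * p j := by
            have : (P : ℤ) + 1 ≤ (x i₁ j : ℤ) - x i₂ j := by push_cast; omega
            exact mul_le_mul_of_nonneg_right this (by positivity)
          nlinarith [hsum2]
        have hup : ∑ k, (u k : ℤ) * p k ≤ (∑ k, (u k : ℕ) : ℤ) * P := by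
          push_cast
          rw [Finset.sum_mul]
          apply Finset.sum_le_sum
          intro k _
          exact mul_le_mul_of_nonneg_left (by exact_mod_cast Finset.le_sup (f := p) (Finset.mem_univ k)) (by positivity)
        -- conclude
        have hPpos : (0:ℤ) < P := by exact_mod_cast lt_of_lt_of_le hpj1 hPj
        have hfin : ((p j : ℕ) : ℤ) < ((∑ k, u k : ℕ) : ℤ) := by push_cast; nlinarith
        exact_mod_cast le_of_lt hfin
      obtain ⟨s, t, hsu, ht1, htP, hsum⟩ := exists_submult p u P (p j) hpj1 hp
        (fun k => Finset.le_sup (Finset.mem_univ k)) hcount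
      refine ⟨t, s, ht1, by omega, ?_, ?_, Or.inl hsum⟩
      · have := hsu j
        simp only [hu, if_pos rfl] at this
        omega
      · intro k
        by_cases hk : k = j
        · subst hk
          have := hsu k
          simp only [hu, if_pos rfl] at this
          omega
        · have := hsu k
          simp only [hu, if_neg hk] at this
          exact this
  -- define the new schedule
  set T : Fin d → ℕ := fun k => if k = j then t else 0 with hT
  set y : Fin m → Fin d → ℕ := fun i k =>
    if i = i₁ then x i₁ k + s k - T k
    else if i = i₂ then x i₂ k + T k - s k else x i k with hy
  have hyo : ∀ i, i ≠ i₁ → i ≠ i₂ → ∀ k, y i k = x i k := by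
    intro i h1 h2 k; simp [hy, h1, h2]
  have hTle : ∀ k, T k ≤ x i₁ k + s k := by
    intro k; by_cases hk : k = j
    · subst hk; simp [hT]; omega
    · simp [hT, hk]
  have hskx : ∀ k, s k ≤ x i₂ k := fun k => le_trans (hsle k) (Nat.sub_le _ _)
  have hy1 : ∀ k, y i₁ k = x i₁ k + s k - T k := by intro k; simp [hy]
  have hy2 : ∀ k, y i₂ k = x i₂ k + T k - s k := by intro k; simp [hy, Ne.symm hne, hne]
  -- y is a schedule
  have hyS : IsSchedule n y := by
    intro k
    have hr : ∑ i ∈ (Finset.univ.erase i₁).erase i₂, y i k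
        = ∑ i ∈ (Finset.univ.erase i₁).erase i₂, x i k := by
      apply Finset.sum_congr rfl
      intro i hi
      rw [Finset.mem_erase, Finset.mem_erase] at hi
      exact hyo i hi.2.1 hi.1 k
    have hxk := hx k
    rw [sum_split (fun i => x i k) i₁ i₂ hne] at hxk
    rw [sum_split (fun i => y i k) i₁ i₂ hne]
    rw [hr, hy1, hy2, ← hxk]
    have h1 := hTle k
    have h2 := hskx k
    omega
  -- load identities
  have hTsum : ∑ k, T k * p k = t * p j := by
    have hc : ∀ k' : Fin d, T k' * p k' = if k' = j then t * p k' else 0 := by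
      intro k'
      rw [hT]
      by_cases h : k' = j <;> simp [h]
    rw [Finset.sum_congr rfl (fun k' _ => hc k')]
    simp
  have hload1 : load p y i₁ + t * p j = load p x i₁ + ∑ k, s k * p k := by
    have key : ∀ k, y i₁ k * p k + T k * p k = x i₁ k * p k + s k * p k := by
      intro k
      rw [hy1, Nat.sub_mul, Nat.sub_add_cancel (Nat.mul_le_mul_right _ (hTle k)), add_mul]
    calc load p y i₁ + t * p j = ∑ k, (y i₁ k * p k + T k * p k) := by
          rw [load, Finset.sum_add_distrib, hTsum]
      _ = ∑ k, (x i₁ k * p k + s k * p k) := Finset.sum_congr rfl (fun k _ => key k)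
      _ = load p x i₁ + ∑ k, s k * p k := by rw [load, Finset.sum_add_distrib]
  have hload2 : load p y i₂ + ∑ k, s k * p k = load p x i₂ + t * p j := by
    have key : ∀ k, y i₂ k * p k + s k * p k = x i₂ k * p k + T k * p k := by
      intro k
      rw [hy2, Nat.sub_mul, Nat.sub_add_cancel
        (Nat.mul_le_mul_right _ (le_trans (hskx k) (Nat.le_add_right _ _))), add_mul]
    calc load p y i₂ + ∑ k, s k * p k = ∑ k, (y i₂ k * p k + s k * p k) := by
          rw [load, Finset.sum_add_distrib]
      _ = ∑ k, (x i₂ k * p k + T k * p k) := Finset.sum_congr rfl (fun k _ => key k)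
      _ = load p x i₂ + t * p j := by rw [load, Finset.sum_add_distrib, hTsum]
  have hloado : ∀ i, i ≠ i₁ → i ≠ i₂ → load p y i = load p x i := by
    intro i h1 h2
    exact Finset.sum_congr rfl (fun k _ => by rw [hyo i h1 h2 k])
  -- Cenvy bound
  have hcenvy : Cenvy p y ≤ Cenvy p x := by
    rcases hload with hA | ⟨hs0, ht1', hB⟩
    · have h1 : load p y i₁ = load p x i₁ := by omega
      have h2 : load p y i₂ = load p x i₂ := by omega
      have hle : load p y = load p x := by
        funext i
        by_cases e1 : i = i₁
        · rw [e1]; exact h1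
        · by_cases e2 : i = i₂
          · rw [e2]; exact h2
          · exact hloado i e1 e2
      unfold Cenvy Cmax Cmin
      rw [hle]
    · have hs0' : ∑ k, s k * p k = 0 := by
        apply Finset.sum_eq_zero; intro k _; rw [hs0 k, zero_mul]
      rw [hs0', ht1', one_mul] at hload1 hload2
      have hL1 : load p x i₁ ≤ Cmax p x := Finset.le_sup (Finset.mem_univ i₁)
      have hL2 : Cmin p x ≤ load p x i₂ := Nat.sInf_le ⟨i₂, rfl⟩
      have hCmax : Cmax p y ≤ Cmax p x := by
        apply Finset.sup_le
        intro i _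
        by_cases e1 : i = i₁
        · rw [e1]; omega
        · by_cases e2 : i = i₂
          · rw [e2]; omega
          · rw [hloado i e1 e2]; exact Finset.le_sup (Finset.mem_univ i)
      have hCmin : Cmin p x ≤ Cmin p y := by
        apply le_csInf ⟨load p y ⟨0, hm⟩, Set.mem_range_self _⟩
        rintro b ⟨i, rfl⟩
        by_cases e1 : i = i₁
        · rw [e1]; omega
        · by_cases e2 : i = i₂
          · rw [e2]; omega
          · rw [hloado i e1 e2]; exact Nat.sInf_le ⟨i, rfl⟩
      exact tsub_le_tsub hCmax hCmin
  -- Psi decreases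
  have hjterm : y i₁ j * y i₁ j + y i₂ j * y i₂ j < x i₁ j * x i₁ j + x i₂ j * x i₂ j := by
    rw [hy1, hy2]
    simp only [hT, if_pos rfl, hsj, Nat.add_zero, Nat.sub_zero]
    obtain ⟨c, hc⟩ : ∃ c, x i₁ j = c + t := ⟨x i₁ j - t, by omega⟩
    rw [hc, Nat.add_sub_cancel]
    have hb : x i₂ j < c := by omega
    nlinarith [hb, ht1]
  have hpsi : Psi y < Psi x := by
    unfold Psi
    have hrest : ∑ i ∈ (Finset.univ.erase i₁).erase i₂, ∑ k, y i k * y i k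
        = ∑ i ∈ (Finset.univ.erase i₁).erase i₂, ∑ k, x i k * x i k := by
      apply Finset.sum_congr rfl
      intro i hi
      rw [Finset.mem_erase, Finset.mem_erase] at hi
      exact Finset.sum_congr rfl (fun k _ => by rw [hyo i hi.2.1 hi.1 k])
    have hmain : ∑ k, (y i₁ k * y i₁ k + y i₂ k * y i₂ k)
        < ∑ k, (x i₁ k * x i₁ k + x i₂ k * x i₂ k) := by
      apply Finset.sum_lt_sum
      · intro k _
        by_cases hk : k = j
        · rw [hk]; exact le_of_lt hjterm
        · rw [hy1, hy2]
          simp only [hT, if_neg hk, Nat.add_zero, Nat.sub_zero]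
          rcases Nat.eq_zero_or_pos (s k) with h0 | hpos
          · rw [h0]; simp
          · have h1 : x i₁ k + s k ≤ x i₂ k := by
              have := hsle k; omega
            obtain ⟨c, hc⟩ : ∃ c, x i₂ k = c + s k := ⟨x i₂ k - s k, by omega⟩
            rw [hc, Nat.add_sub_cancel]
            have ha : x i₁ k ≤ c := by omega
            nlinarith [ha]
      · exact ⟨j, Finset.mem_univ j, hjterm⟩
    rw [sum_split (fun i => ∑ k, y i k * y i k) i₁ i₂ hne,
        sum_split (fun i => ∑ k, x i k * x i k) i₁ i₂ hne]
    rw [hrest]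
    rw [Finset.sum_add_distrib] at hmain
    rw [Finset.sum_add_distrib (f := fun k => x i₁ k * x i₁ k)] at hmain
    omega
  exact ⟨y, hyS, hcenvy, hpsi⟩

theorem exists_Cenvy_minimizer_small_gap (d m : ℕ) (hd : 1 ≤ d) (hm : 1 ≤ m)
    (p : Fin d → ℕ) (hp : ∀ j, 1 ≤ p j) (n : Fin d → ℕ) :
    ∃ xstar : Fin m → Fin d → ℕ, IsSchedule n xstar ∧
      (∀ x : Fin m → Fin d → ℕ, IsSchedule n x → Cenvy p xstar ≤ Cenvy p x) ∧
      ∀ (i₁ i₂ : Fin m) (j : Fin d), xstar i₁ j ≤ xstar i₂ j + Finset.univ.sup p := by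
  classical
  -- a base schedule exists
  have hbase : ∃ x : Fin m → Fin d → ℕ, IsSchedule n x := by
    refine ⟨fun i j => if i = ⟨0, hm⟩ then n j else 0, fun j => ?_⟩
    simp
  set Sc : Set ℕ := {v | ∃ x : Fin m → Fin d → ℕ, IsSchedule n x ∧ Cenvy p x = v} with hSc
  have hScne : Sc.Nonempty := by
    obtain ⟨x₀, hx₀⟩ := hbase
    exact ⟨Cenvy p x₀, x₀, hx₀, rfl⟩
  set c := sInf Sc with hc
  obtain ⟨x₁, hx₁, hcx₁⟩ := Nat.sInf_mem hScne
  set Ps : Set ℕ := {v | ∃ x : Fin m → Fin d → ℕ,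
    IsSchedule n x ∧ Cenvy p x = c ∧ (∑ i, ∑ k, x i k * x i k) = v} with hPs
  have hPsne : Ps.Nonempty := ⟨_, x₁, hx₁, hcx₁, rfl⟩
  obtain ⟨xstar, hsched, hcen, hpsi⟩ := Nat.sInf_mem hPsne
  refine ⟨xstar, hsched, ?_, ?_⟩
  · intro x hx
    rw [hcen]
    exact Nat.sInf_le ⟨x, hx, rfl⟩
  · by_contra hcon
    push_neg at hcon
    obtain ⟨i₁, i₂, j, hlt⟩ := hcon
    obtain ⟨y, hy, hcy, hpy⟩ := improve hm p hp n xstar hsched i₁ i₂ j hlt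
    have h1 : Cenvy p y = c := le_antisymm (hcy.trans_eq hcen) (Nat.sInf_le ⟨y, hy, rfl⟩)
    have h2 : sInf Ps ≤ Psi y := Nat.sInf_le ⟨y, hy, h1, rfl⟩
    have h3 : Psi xstar = sInf Ps := hpsi
    unfold Psi at h2 h3
    have h4 := hpy
    unfold Psi at h4
    omega
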